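/- For every n ≥ 2, the uniform probability distribution on the set of simple graphs with vertex set {1,...,n} having an even number of edges is the induced distribution of some coloring model on n vertices. -/

import Mathlib

open scoped Classical

structure ColoringModel (n : ℕ) where
  Ω : Fin n → Type
  fin : ∀ v, Fintype (Ω v)
  p : ∀ v, Ω v → ℝ
  nonneg : ∀ v ω, 0 ≤ p v ω
  sum_one : ∀ v, ∑ ω ∈ @Finset.univ (Ω v) (fin v), p v ω = 1
  f : ∀ u v : Fin n, Ω u → Ω v → Bool
  symm : ∀ u v x y, f u v x y = f v u y x

def ColoringModel.graph {n : ℕ} (M : ColoringModel n) (ω : ∀ v, M.Ω v) :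
    SimpleGraph (Fin n) where
  Adj u v := u ≠ v ∧ M.f u v (ω u) (ω v) = true
  symm := ⟨by
    rintro u v ⟨h1, h2⟩
    refine ⟨h1.symm, ?_⟩
    rw [M.symm]
    exact h2⟩
  loopless := ⟨fun u h => h.1 rfl⟩

noncomputable def ColoringModel.pr {n : ℕ} (M : ColoringModel n)
    (P : SimpleGraph (Fin n) → Prop) : ℝ :=
  letI := M.fin
  ∑ ω : (∀ v, M.Ω v), if P (M.graph ω) then ∏ v, M.p v (ω v) else 0

noncomputable def ColoringModel.dist {n : ℕ} (M : ColoringModel n)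
    (G : SimpleGraph (Fin n)) : ℝ :=
  M.pr (fun H => H = G)

noncomputable def evenEdgeUniform (n : ℕ) : SimpleGraph (Fin n) → ℝ := fun G =>
  if Even (Nat.card G.edgeSet) then
    (1 : ℝ) /
      ((Finset.univ.filter
        (fun H : SimpleGraph (Fin n) => Even (Nat.card H.edgeSet))).card : ℝ)
  else 0


open Finset

section Aux

noncomputable def az (P : Prop) : ZMod 2 := if P then 1 else 0
def bz (b : Bool) : ZMod 2 := if b then 1 else 0

lemma bz_xor : ∀ a b : Bool, bz (xor a b) = bz a + bz b := by decide
lemma bz_inj : ∀ {a b : Bool}, bz a = bz b → a = b := by decide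
lemma bz_decide_eq_one : ∀ s : ZMod 2, bz (decide (s = 1)) = s := by decide
lemma bz_true_iff {b : Bool} {P : Prop} (h : bz b = az P) : b = true ↔ P := by
  by_cases hP : P <;> cases b <;> simp_all [az, bz]
lemma az_true {P : Prop} (h : P) : az P = 1 := if_pos h
lemma az_false {P : Prop} (h : ¬ P) : az P = 0 := if_neg h
lemma zmod2_add_self (x : ZMod 2) : x + x = 0 := by
  rw [← two_mul]; exact mul_eq_zero_of_left rfl x

lemma zmod2_cancel {a b : ZMod 2} (h : a + b = 0) : a = b := by
  have : a = -b := eq_neg_of_add_eq_zero_left h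
  rwa [neg_eq_iff_add_eq_zero.mpr (zmod2_add_self b)] at this

variable {n : ℕ} [NeZero n]

/-- parity of the used coordinates of a color -/
def gpar (v : Fin n) (y : Fin n → Bool) : Bool :=
  decide ((∑ u ∈ univ.filter (fun u => u ≠ 0 ∧ u ≠ v), bz (y u)) = 1)

lemma bz_gpar (v : Fin n) (y : Fin n → Bool) :
    bz (gpar v y) = ∑ u ∈ univ.filter (fun u => u ≠ 0 ∧ u ≠ v), bz (y u) :=
  bz_decide_eq_one _

def ef (u v : Fin n) (x y : Fin n → Bool) : Bool :=
  if u = v then false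
  else if u = 0 then gpar v y
  else if v = 0 then gpar u x
  else xor (x v) (y u)

lemma ef_symm (u v : Fin n) (x : Fin n → Bool) (y : Fin n → Bool) :
    ef u v x y = ef v u y x := by
  unfold ef
  by_cases huv : u = v
  · subst huv; simp
  · have hvu : ¬ v = u := fun h => huv h.symm
    by_cases hu : u = 0
    · have hv : ¬ v = 0 := fun h => huv (hu.trans h.symm)
      have hv' : ¬ (0 : Fin n) = v := fun h => hv h.symm
      simp [huv, hvu, hu, hv, hv']
    · have hu' : ¬ (0 : Fin n) = u := fun h => hu h.symm
      by_cases hv : v = 0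
      · simp [huv, hvu, hu, hv, hu']
      · simp [huv, hvu, hu, hv, hu', Bool.xor_comm]

lemma gpar_xor (v : Fin n) (y y' : Fin n → Bool) :
    gpar v (fun i => xor (y i) (y' i)) = xor (gpar v y) (gpar v y') := by
  apply bz_inj
  rw [bz_xor, bz_gpar, bz_gpar, bz_gpar, ← Finset.sum_add_distrib]
  exact Finset.sum_congr rfl fun u _ => bz_xor _ _

lemma ef_xor (u v : Fin n) (x x' y y' : Fin n → Bool) :
    ef u v (fun i => xor (x i) (x' i)) (fun i => xor (y i) (y' i)) =
      xor (ef u v x y) (ef u v x' y') := by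
  unfold ef
  by_cases huv : u = v
  · simp [huv]
  · by_cases hu : u = 0
    · have h0v : ¬ (0 : Fin n) = v := fun h => huv (hu.trans h)
      simp [huv, hu, h0v, gpar_xor]
    · by_cases hv : v = 0
      · simp [huv, hu, hv, gpar_xor]
      · simp only [huv, hu, hv, if_false]
        apply bz_inj
        simp only [bz_xor]; ring

lemma card_edge_pairs (G : SimpleGraph (Fin n)) :
    G.edgeFinset.card =
      (univ.filter (fun p : Fin n × Fin n => p.1 < p.2 ∧ G.Adj p.1 p.2)).card := by
  apply Finset.card_nbij' (i := fun e => ((Sym2.sortEquiv e : { p : Fin n × Fin n // p.1 ≤ p.2 }) :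
      Fin n × Fin n)) (j := fun p => Sym2.mk p.1 p.2)
  · intro e he
    induction e using Sym2.ind with
    | _ a b =>
      rw [Finset.mem_coe, SimpleGraph.mem_edgeFinset, SimpleGraph.mem_edgeSet] at he
      simp only [Finset.mem_coe, mem_filter, mem_univ, true_and, Sym2.sortEquiv_apply_coe,
        Sym2.inf_mk, Sym2.sup_mk]
      rcases lt_or_gt_of_ne he.ne with h | h
      · rw [inf_eq_left.mpr h.le, sup_eq_right.mpr h.le]
        exact ⟨h, he⟩
      · rw [inf_eq_right.mpr h.le, sup_eq_left.mpr h.le]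
        exact ⟨h, he.symm⟩
  · intro p hp
    simp only [Finset.mem_coe, mem_filter] at hp
    rw [Finset.mem_coe, SimpleGraph.mem_edgeFinset, SimpleGraph.mem_edgeSet]
    exact hp.2.2
  · intro e he
    exact Sym2.sortEquiv.symm_apply_apply e
  · intro p hp
    obtain ⟨a, b⟩ := p
    simp only [Finset.mem_coe, mem_filter] at hp
    have h : a ≤ b := le_of_lt hp.2.1
    simp only [Sym2.sortEquiv_apply_coe, Sym2.inf_mk, Sym2.sup_mk]
    rw [inf_eq_left.mpr h, sup_eq_right.mpr h]

noncomputable def Spar (G : SimpleGraph (Fin n)) : ZMod 2 :=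
  ∑ p ∈ univ.filter (fun p : Fin n × Fin n => p.1 < p.2), az (G.Adj p.1 p.2)

lemma even_iff_Spar (G : SimpleGraph (Fin n)) :
    Even (Nat.card G.edgeSet) ↔ Spar G = 0 := by
  have h1 : Nat.card G.edgeSet = G.edgeFinset.card := by
    rw [Nat.card_eq_fintype_card, SimpleGraph.edgeFinset_card]
  have h2 : Spar G = (Nat.card G.edgeSet : ZMod 2) := by
    rw [h1, card_edge_pairs]
    unfold Spar az
    rw [Finset.sum_boole, Finset.filter_filter]
  rw [h2, even_iff_two_dvd, ← ZMod.natCast_eq_zero_iff]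

lemma fin_pos_iff {u : Fin n} : 0 < u ↔ u ≠ 0 := Fin.pos_iff_ne_zero' u
lemma fin_ne_zero_of_lt {u v : Fin n} (hu : u ≠ 0) (huv : u < v) : v ≠ 0 :=
  fin_pos_iff.mp (lt_trans (fin_pos_iff.mpr hu) huv)

/-- The coloring model. -/
noncomputable def CM (n : ℕ) [NeZero n] : ColoringModel n where
  Ω _ := Fin n → Bool
  fin _ := inferInstance
  p _ _ := ((2 : ℝ) ^ n)⁻¹
  nonneg _ _ := by positivity
  sum_one v := by
    rw [Finset.sum_const, Finset.card_univ]
    have hcard : Fintype.card (Fin n → Bool) = 2 ^ n := by simp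
    rw [hcard, nsmul_eq_mul]
    push_cast
    rw [mul_inv_cancel₀ (by positivity)]
  f := ef
  symm := ef_symm

lemma CM_adj (ω : ∀ v : Fin n, (CM n).Ω v) (u v : Fin n) :
    ((CM n).graph ω).Adj u v ↔ u ≠ v ∧ ef u v (ω u) (ω v) = true := Iff.rfl

/-- Fact Ackbone: the double sum expression of Spar. -/
lemma Spar_eq_double (G : SimpleGraph (Fin n)) :
    Spar G = ∑ u : Fin n, ∑ v : Fin n, if u < v then az (G.Adj u v) else 0 := by
  unfold Spar
  rw [Finset.sum_filter, Fintype.sum_prod_type]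

/-- Fact A: every generated graph has an even number of edges. -/
lemma Spar_CM_graph (ω : ∀ v : Fin n, (CM n).Ω v) : Spar ((CM n).graph ω) = 0 := by
  classical
  set Q : ZMod 2 :=
    ∑ v : Fin n, ∑ u : Fin n, if v ≠ 0 ∧ u ≠ 0 ∧ u ≠ v then bz (ω v u) else 0 with hQ
  have key : Spar ((CM n).graph ω) = Q + Q := by
    rw [Spar_eq_double]
    have step1 : ∀ u v : Fin n,
        (if u < v then az (((CM n).graph ω).Adj u v) else 0) =
          (if u = 0 ∧ u < v then bz (gpar v (ω v)) else 0) +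
          ((if u ≠ 0 ∧ u < v then bz (ω u v) else 0) +
           (if u ≠ 0 ∧ u < v then bz (ω v u) else 0)) := by
      intro u v
      by_cases h : u < v
      · have hne : u ≠ v := ne_of_lt h
        have hadj : az (((CM n).graph ω).Adj u v) = bz (ef u v (ω u) (ω v)) := by
          by_cases he : ef u v (ω u) (ω v) = true <;>
            simp [CM_adj, az, bz, hne, he]
        rw [hadj]
        by_cases hu : u = 0
        · subst hu
          have hef : ef 0 v (ω 0) (ω v) = gpar v (ω v) := by
            unfold ef; rw [if_neg hne, if_pos rfl]
          simp [h, hef]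
        · have hv : v ≠ 0 := fin_ne_zero_of_lt hu h
          have hef : ef u v (ω u) (ω v) = xor ((ω u) v) ((ω v) u) := by
            unfold ef; rw [if_neg hne, if_neg hu, if_neg hv]
          simp [h, hu, hef, bz_xor]
      · simp [h]
    calc ∑ u : Fin n, ∑ v : Fin n, (if u < v then az (((CM n).graph ω).Adj u v) else 0)
        = (∑ u : Fin n, ∑ v : Fin n, if u = 0 ∧ u < v then bz (gpar v (ω v)) else 0) +
          ((∑ u : Fin n, ∑ v : Fin n, if u ≠ 0 ∧ u < v then bz (ω u v) else 0) +
           (∑ u : Fin n, ∑ v : Fin n, if u ≠ 0 ∧ u < v then bz (ω v u) else 0)) := by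
          rw [← Finset.sum_add_distrib, ← Finset.sum_add_distrib]
          refine Finset.sum_congr rfl fun u _ => ?_
          rw [← Finset.sum_add_distrib, ← Finset.sum_add_distrib]
          exact Finset.sum_congr rfl fun v _ => step1 u v
      _ = Q + Q := by
          have hsplit : Q =
              (∑ v : Fin n, ∑ u : Fin n, if v ≠ 0 ∧ u ≠ 0 ∧ v < u then bz (ω v u) else 0) +
              (∑ v : Fin n, ∑ u : Fin n, if v ≠ 0 ∧ u ≠ 0 ∧ u < v then bz (ω v u) else 0) := by
            rw [hQ, ← Finset.sum_add_distrib]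
            refine Finset.sum_congr rfl fun v _ => ?_
            rw [← Finset.sum_add_distrib]
            refine Finset.sum_congr rfl fun u _ => ?_
            rcases lt_trichotomy v u with h | h | h
            · simp [h, ne_of_gt h, lt_asymm h]
            · simp [h]
            · simp [h, ne_of_lt h, lt_asymm h]
          have hB1 : (∑ u : Fin n, ∑ v : Fin n, if u ≠ 0 ∧ u < v then bz (ω u v) else 0)
              = ∑ v : Fin n, ∑ u : Fin n, if v ≠ 0 ∧ u ≠ 0 ∧ v < u then bz (ω v u) else 0 := by
            refine Finset.sum_congr rfl fun v _ => Finset.sum_congr rfl fun u _ => ?_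
            by_cases h : v ≠ 0 ∧ v < u
            · rw [if_pos h, if_pos ⟨h.1, fin_ne_zero_of_lt h.1 h.2, h.2⟩]
            · rw [if_neg h, if_neg (fun hc => h ⟨hc.1, hc.2.2⟩)]
          have hB2 : (∑ u : Fin n, ∑ v : Fin n, if u ≠ 0 ∧ u < v then bz (ω v u) else 0)
              = ∑ v : Fin n, ∑ u : Fin n, if v ≠ 0 ∧ u ≠ 0 ∧ u < v then bz (ω v u) else 0 := by
            rw [Finset.sum_comm]
            refine Finset.sum_congr rfl fun v _ => Finset.sum_congr rfl fun u _ => ?_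
            by_cases h : u ≠ 0 ∧ u < v
            · rw [if_pos h, if_pos ⟨fin_ne_zero_of_lt h.1 h.2, h.1, h.2⟩]
            · rw [if_neg h, if_neg (fun hc => h ⟨hc.2.1, hc.2.2⟩)]
          have hA1 : (∑ u : Fin n, ∑ v : Fin n, if u = 0 ∧ u < v then bz (gpar v (ω v)) else 0)
              = Q := by
            rw [Finset.sum_eq_single (0 : Fin n) (fun u _ hu => by simp [hu]) (by simp), hQ]
            refine Finset.sum_congr rfl fun v _ => ?_
            by_cases hv : v = 0
            · simp [hv]
            · rw [if_pos ⟨rfl, fin_pos_iff.mpr hv⟩, bz_gpar v (ω v), Finset.sum_filter]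
              refine Finset.sum_congr rfl fun u _ => ?_
              by_cases h : u ≠ 0 ∧ u ≠ v
              · rw [if_pos h, if_pos ⟨hv, h⟩]
              · rw [if_neg h, if_neg (fun hc => h hc.2)]
          rw [hA1, hB1, hB2, ← hsplit]
  rw [key, zmod2_add_self]

section TwoLe
variable (hn : 2 ≤ n)
include hn

lemma fin_val_one : (1 : Fin n).val = 1 := by
  rw [Fin.val_one']; exact Nat.mod_eq_of_lt (by omega)

lemma fin_zero_ne_one : (0 : Fin n) ≠ 1 := by
  intro h
  have := congrArg Fin.val h
  rw [Fin.val_zero, fin_val_one hn] at this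
  exact absurd this (by omega)

lemma fin_zero_lt_one : (0 : Fin n) < 1 := by
  rw [Fin.lt_def, Fin.val_zero, fin_val_one hn]; omega

lemma fin_one_lt_iff {v : Fin n} : 1 < v ↔ v ≠ 0 ∧ v ≠ 1 := by
  rw [Fin.lt_def, fin_val_one hn]
  simp only [Ne, Fin.ext_iff, Fin.val_zero, fin_val_one hn]
  omega

lemma Spar_decomp (G : SimpleGraph (Fin n)) :
    Spar G = az (G.Adj 0 1)
      + ((∑ v ∈ univ.filter (fun v : Fin n => v ≠ 0 ∧ v ≠ 1), az (G.Adj 0 v))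
      + ((∑ v ∈ univ.filter (fun v : Fin n => v ≠ 0 ∧ v ≠ 1), az (G.Adj 1 v))
      + (∑ v ∈ univ.filter (fun v : Fin n => v ≠ 0 ∧ v ≠ 1),
          ∑ w ∈ univ.filter (fun w : Fin n => w ≠ 0 ∧ w ≠ 1 ∧ w < v), az (G.Adj w v)))) := by
  rw [Spar_eq_double]
  have step : ∀ u v : Fin n, (if u < v then az (G.Adj u v) else 0) =
      (if u = 0 ∧ v = 1 then az (G.Adj u v) else 0)
      + ((if u = 0 ∧ (v ≠ 0 ∧ v ≠ 1) then az (G.Adj u v) else 0)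
      + ((if u = 1 ∧ (v ≠ 0 ∧ v ≠ 1) then az (G.Adj u v) else 0)
      + (if u ≠ 0 ∧ u ≠ 1 ∧ u < v then az (G.Adj u v) else 0))) := by
    intro u v
    by_cases h : u < v
    · rw [if_pos h]
      by_cases hu0 : u = 0
      · subst hu0
        have hv0 : v ≠ 0 := fin_pos_iff.mp h
        by_cases hv1 : v = 1
        · rw [if_pos ⟨rfl, hv1⟩, if_neg (fun hc => hc.2.2 hv1),
            if_neg (fun hc => fin_zero_ne_one hn hc.1),
            if_neg (fun hc => hc.1 rfl)]
          simp
        · rw [if_neg (fun hc => hv1 hc.2), if_pos ⟨rfl, hv0, hv1⟩,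
            if_neg (fun hc => fin_zero_ne_one hn hc.1),
            if_neg (fun hc => hc.1 rfl)]
          simp
      · by_cases hu1 : u = 1
        · subst hu1
          have hv : v ≠ 0 ∧ v ≠ 1 := (fin_one_lt_iff hn).mp h
          rw [if_neg (fun hc => fin_zero_ne_one hn hc.1.symm),
            if_neg (fun hc => fin_zero_ne_one hn hc.1.symm),
            if_pos ⟨rfl, hv⟩, if_neg (fun hc => hc.2.1 rfl)]
          simp
        · rw [if_neg (fun hc => hu0 hc.1), if_neg (fun hc => hu0 hc.1),
            if_neg (fun hc => hu1 hc.1), if_pos ⟨hu0, hu1, h⟩]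
          simp
    · rw [if_neg h,
        if_neg (fun (hc : u = 0 ∧ v = 1) => h (by rw [hc.1, hc.2]; exact fin_zero_lt_one hn)),
        if_neg (fun (hc : u = 0 ∧ v ≠ 0 ∧ v ≠ 1) => h (by rw [hc.1]; exact fin_pos_iff.mpr hc.2.1)),
        if_neg (fun (hc : u = 1 ∧ v ≠ 0 ∧ v ≠ 1) => h (by rw [hc.1]; exact (fin_one_lt_iff hn).mpr hc.2)),
        if_neg (fun (hc : u ≠ 0 ∧ u ≠ 1 ∧ u < v) => h hc.2.2)]
      simp
  rw [Finset.sum_congr rfl (fun u _ => Finset.sum_congr rfl (fun v _ => step u v))]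
  simp only [Finset.sum_add_distrib]
  have T1 : (∑ u : Fin n, ∑ v : Fin n, if u = 0 ∧ v = 1 then az (G.Adj u v) else 0)
      = az (G.Adj 0 1) := by
    rw [Finset.sum_eq_single (0 : Fin n) (fun u _ hu => by simp [hu]) (by simp),
      Finset.sum_eq_single (1 : Fin n) (fun v _ hv => by simp [hv]) (by simp)]
    simp
  have T2 : (∑ u : Fin n, ∑ v : Fin n, if u = 0 ∧ (v ≠ 0 ∧ v ≠ 1) then az (G.Adj u v) else 0)
      = ∑ v ∈ univ.filter (fun v : Fin n => v ≠ 0 ∧ v ≠ 1), az (G.Adj 0 v) := by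
    rw [Finset.sum_eq_single (0 : Fin n) (fun u _ hu => by simp [hu]) (by simp),
      Finset.sum_filter]
    exact Finset.sum_congr rfl fun v _ => by simp
  have T3 : (∑ u : Fin n, ∑ v : Fin n, if u = 1 ∧ (v ≠ 0 ∧ v ≠ 1) then az (G.Adj u v) else 0)
      = ∑ v ∈ univ.filter (fun v : Fin n => v ≠ 0 ∧ v ≠ 1), az (G.Adj 1 v) := by
    rw [Finset.sum_eq_single (1 : Fin n) (fun u _ hu => by simp [hu]) (by simp),
      Finset.sum_filter]
    exact Finset.sum_congr rfl fun v _ => by simp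
  have T4 : (∑ u : Fin n, ∑ v : Fin n, if u ≠ 0 ∧ u ≠ 1 ∧ u < v then az (G.Adj u v) else 0)
      = ∑ v ∈ univ.filter (fun v : Fin n => v ≠ 0 ∧ v ≠ 1),
          ∑ w ∈ univ.filter (fun w : Fin n => w ≠ 0 ∧ w ≠ 1 ∧ w < v), az (G.Adj w v) := by
    rw [Finset.sum_comm, Finset.sum_filter]
    refine Finset.sum_congr rfl fun v _ => ?_
    by_cases hv : v ≠ 0 ∧ v ≠ 1
    · rw [if_pos hv, Finset.sum_filter]
    · rw [if_neg hv]
      exact Finset.sum_eq_zero fun u _ => if_neg fun hc =>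
        hv ((fin_one_lt_iff hn).mp (lt_trans ((fin_one_lt_iff hn).mpr ⟨hc.1, hc.2.1⟩) hc.2.2))
  rw [T1, T2, T3, T4]

end TwoLe

lemma bz_decide {P : Prop} [Decidable P] : bz (decide P) = az P := by
  by_cases h : P <;> simp [az, bz, h]

lemma az_congr {P Q : Prop} (h : P ↔ Q) : az P = az Q := by
  by_cases hP : P
  · rw [az_true hP, az_true (h.mp hP)]
  · rw [az_false hP, az_false (fun q => hP (h.mpr q))]

noncomputable def Xv (G : SimpleGraph (Fin n)) (v : Fin n) : Bool :=
  decide ((az (G.Adj 0 v) +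
    ∑ u ∈ univ.filter (fun u : Fin n => u ≠ 0 ∧ u ≠ 1 ∧ u < v), az (G.Adj u v)) = 1)

lemma bz_Xv (G : SimpleGraph (Fin n)) (v : Fin n) :
    bz (Xv G v) = az (G.Adj 0 v) +
      ∑ u ∈ univ.filter (fun u : Fin n => u ≠ 0 ∧ u ≠ 1 ∧ u < v), az (G.Adj u v) :=
  bz_decide_eq_one _

noncomputable def wit (G : SimpleGraph (Fin n)) : ∀ v : Fin n, (CM n).Ω v := fun v u =>
  if v = 0 ∨ u = 0 ∨ u = v then false
  else if v = 1 then xor (decide (G.Adj 1 u)) (Xv G u)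
  else if u = 1 then Xv G v
  else decide (u < v ∧ G.Adj u v)

section TwoLe2
variable (hn : 2 ≤ n) (G : SimpleGraph (Fin n))
include hn

lemma wit_one_coord (u : Fin n) (hu0 : u ≠ 0) (hu1 : u ≠ 1) :
    wit G 1 u = xor (decide (G.Adj 1 u)) (Xv G u) := by
  unfold wit
  rw [if_neg (fun h => h.elim (fun h => fin_zero_ne_one hn h.symm)
    (fun h => h.elim hu0 hu1)), if_pos rfl]

lemma wit_coord_one (v : Fin n) (hv0 : v ≠ 0) (hv1 : v ≠ 1) :
    wit G v 1 = Xv G v := by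
  unfold wit
  rw [if_neg (fun h => h.elim hv0 (fun h => h.elim
    (fun h => fin_zero_ne_one hn h.symm) (fun h => hv1 h.symm))), if_neg hv1, if_pos rfl]

lemma wit_big (v u : Fin n) (hv0 : v ≠ 0) (hv1 : v ≠ 1) (hu0 : u ≠ 0) (hu1 : u ≠ 1)
    (huv : u ≠ v) : wit G v u = decide (u < v ∧ G.Adj u v) := by
  unfold wit
  rw [if_neg (fun h => h.elim hv0 (fun h => h.elim hu0 huv)), if_neg hv1, if_neg hu1]

lemma wit_graph (hG : Spar G = 0) : (CM n).graph (wit G) = G := by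
  have key : ∀ u v : Fin n, u < v → (ef u v (wit G u) (wit G v) = true ↔ G.Adj u v) := by
    intro u v huv
    have hne : u ≠ v := ne_of_lt huv
    apply bz_true_iff
    by_cases hu0 : u = 0
    · subst hu0
      have hv0 : v ≠ 0 := fin_pos_iff.mp huv
      have hef : ef 0 v (wit G 0) (wit G v) = gpar v (wit G v) := by
        unfold ef; rw [if_neg hne, if_pos rfl]
      rw [hef, bz_gpar v (wit G v)]
      by_cases hv1 : v = 1
      · subst hv1
        have hterm : ∀ u' ∈ univ.filter (fun u' : Fin n => u' ≠ 0 ∧ u' ≠ 1),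
            bz (wit G 1 u') = az (G.Adj 1 u') + (az (G.Adj 0 u') +
              ∑ w ∈ univ.filter (fun w : Fin n => w ≠ 0 ∧ w ≠ 1 ∧ w < u'),
                az (G.Adj w u')) := by
          intro u' hu'
          simp only [mem_filter] at hu'
          rw [wit_one_coord hn G u' hu'.2.1 hu'.2.2, bz_xor, bz_decide, bz_Xv]
        rw [Finset.sum_congr rfl hterm, Finset.sum_add_distrib, Finset.sum_add_distrib]
        have h0 : az (G.Adj 0 1)
            + ((∑ v ∈ univ.filter (fun v : Fin n => v ≠ 0 ∧ v ≠ 1), az (G.Adj 0 v))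
            + ((∑ v ∈ univ.filter (fun v : Fin n => v ≠ 0 ∧ v ≠ 1), az (G.Adj 1 v))
            + (∑ v ∈ univ.filter (fun v : Fin n => v ≠ 0 ∧ v ≠ 1),
                ∑ w ∈ univ.filter (fun w : Fin n => w ≠ 0 ∧ w ≠ 1 ∧ w < v),
                  az (G.Adj w v)))) = 0 := by
          rw [← Spar_decomp hn G]; exact hG
        have h1 := zmod2_cancel h0
        rw [h1]; ring
      · -- pair (0, v) with v ∉ {0,1}
        have hsplit : ∀ f : Fin n → ZMod 2,
            (∑ u' ∈ univ.filter (fun u' : Fin n => u' ≠ 0 ∧ u' ≠ v), f u')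
              = f 1 + ∑ u' ∈ univ.filter
                  (fun u' : Fin n => u' ≠ 0 ∧ u' ≠ 1 ∧ u' ≠ v), f u' := by
          intro f
          rw [Finset.sum_filter, Finset.sum_filter]
          have hpt : ∀ u' : Fin n, (if u' ≠ 0 ∧ u' ≠ v then f u' else 0)
              = (if u' = 1 then f u' else 0)
                + (if u' ≠ 0 ∧ u' ≠ 1 ∧ u' ≠ v then f u' else 0) := by
            intro u'
            by_cases h1 : u' = 1
            · subst h1
              rw [if_pos ⟨fun h => fin_zero_ne_one hn h.symm, fun h => hv1 h.symm⟩,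
                if_pos rfl, if_neg (fun hc => hc.2.1 rfl), add_zero]
            · rw [if_neg h1, zero_add]
              by_cases h : u' ≠ 0 ∧ u' ≠ v
              · rw [if_pos h, if_pos ⟨h.1, h1, h.2⟩]
              · rw [if_neg h, if_neg (fun hc => h ⟨hc.1, hc.2.2⟩)]
          rw [Finset.sum_congr rfl (fun u' _ => hpt u'), Finset.sum_add_distrib,
            Finset.sum_ite_eq' univ (1 : Fin n) f, if_pos (mem_univ 1)]
        rw [hsplit]
        rw [wit_coord_one hn G v hv0 hv1, bz_Xv]
        have hrest : (∑ u' ∈ univ.filter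
              (fun u' : Fin n => u' ≠ 0 ∧ u' ≠ 1 ∧ u' ≠ v), bz (wit G v u'))
            = ∑ u ∈ univ.filter (fun u : Fin n => u ≠ 0 ∧ u ≠ 1 ∧ u < v),
                az (G.Adj u v) := by
          rw [Finset.sum_filter, Finset.sum_filter]
          refine Finset.sum_congr rfl fun u' _ => ?_
          by_cases h : u' ≠ 0 ∧ u' ≠ 1 ∧ u' < v
          · rw [if_pos h, if_pos ⟨h.1, h.2.1, ne_of_lt h.2.2⟩,
              wit_big hn G v u' hv0 hv1 h.1 h.2.1 (ne_of_lt h.2.2), bz_decide,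
              az_congr (and_iff_right h.2.2)]
          · rw [if_neg h]
            by_cases h' : u' ≠ 0 ∧ u' ≠ 1 ∧ u' ≠ v
            · rw [if_pos h', wit_big hn G v u' hv0 hv1 h'.1 h'.2.1 h'.2.2, bz_decide,
                az_false (fun hc => h ⟨h'.1, h'.2.1, hc.1⟩)]
            · rw [if_neg h']
        rw [hrest, add_assoc, zmod2_add_self, add_zero]
    · -- u ≠ 0, so v ≠ 0 as well
      have hv0 : v ≠ 0 := fin_ne_zero_of_lt hu0 huv
      have hef : ef u v (wit G u) (wit G v) = xor (wit G u v) (wit G v u) := by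
        unfold ef; rw [if_neg hne, if_neg hu0, if_neg hv0]
      rw [hef, bz_xor]
      by_cases hu1 : u = 1
      · subst hu1
        have hv : v ≠ 0 ∧ v ≠ 1 := (fin_one_lt_iff hn).mp huv
        rw [wit_one_coord hn G v hv.1 hv.2, wit_coord_one hn G v hv.1 hv.2, bz_xor,
          bz_decide, add_assoc, zmod2_add_self, add_zero]
      · have hv : v ≠ 0 ∧ v ≠ 1 :=
          (fin_one_lt_iff hn).mp (lt_trans ((fin_one_lt_iff hn).mpr ⟨hu0, hu1⟩) huv)
        rw [wit_big hn G u v hu0 hu1 hv.1 hv.2 (ne_of_gt huv),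
          wit_big hn G v u hv.1 hv.2 hu0 hu1 hne, bz_decide, bz_decide,
          az_false (fun hc => asymm huv hc.1), az_congr (and_iff_right huv), zero_add]
  ext u v
  rcases lt_trichotomy u v with h | h | h
  · rw [CM_adj]
    exact ⟨fun hc => (key u v h).mp hc.2, fun hA => ⟨ne_of_lt h, (key u v h).mpr hA⟩⟩
  · subst h
    rw [CM_adj]
    exact ⟨fun hc => absurd rfl hc.1, fun hA => absurd hA (G.loopless.irrefl u)⟩
  · rw [CM_adj, G.adj_comm]
    constructor
    · intro hc
      exact (key v u h).mp ((ef_symm u v (wit G u) (wit G v)) ▸ hc.2)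
    · intro hA
      exact ⟨ne_of_gt h, (ef_symm v u (wit G v) (wit G u)) ▸ (key v u h).mpr hA⟩

end TwoLe2

lemma graph_xor_eq_iff (a κ : ∀ v : Fin n, (CM n).Ω v) :
    (CM n).graph (fun v i => xor (a v i) (κ v i)) = (CM n).graph a ↔
      (CM n).graph κ = ⊥ := by
  constructor
  · intro h
    apply SimpleGraph.ext
    funext u v
    have hk : ((CM n).graph (fun v i => xor (a v i) (κ v i))).Adj u v
        ↔ ((CM n).graph a).Adj u v := by rw [h]
    simp only [CM_adj, CM_adj (fun v i => xor (a v i) (κ v i))] at hk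
    rw [ef_xor u v (a u) (κ u) (a v) (κ v)] at hk
    show (((CM n).graph κ).Adj u v) = ((⊥ : SimpleGraph (Fin n)).Adj u v)
    simp only [CM_adj, SimpleGraph.bot_adj, eq_iff_iff, iff_false]
    by_cases hne : u = v
    · exact fun hc => hc.1 hne
    · intro hc
      rw [hc.2] at hk
      cases hb : ef u v (a u) (a v) <;> simp [hne, hb] at hk
  · intro h
    apply SimpleGraph.ext
    funext u v
    have hk : ((CM n).graph κ).Adj u v ↔ (⊥ : SimpleGraph (Fin n)).Adj u v := by rw [h]
    simp only [CM_adj, SimpleGraph.bot_adj, iff_false] at hk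
    show _ = _
    simp only [CM_adj, CM_adj (fun v i => xor (a v i) (κ v i)), eq_iff_iff]
    rw [ef_xor u v (a u) (κ u) (a v) (κ v)]
    by_cases hne : u = v
    · simp [hne]
    · have hκ : ef u v (κ u) (κ v) = false := by
        cases hb : ef u v (κ u) (κ v)
        · rfl
        · exact absurd ⟨hne, hb⟩ hk
      rw [hκ]
      simp

lemma fiber_card_eq (G : SimpleGraph (Fin n)) (a : ∀ v : Fin n, (CM n).Ω v)
    (ha : (CM n).graph a = G) :
    (univ.filter (fun ω : ∀ _ : Fin n, Fin n → Bool => (CM n).graph ω = G)).card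
      = (univ.filter (fun κ : ∀ _ : Fin n, Fin n → Bool => (CM n).graph κ = ⊥)).card := by
  have hinv : ∀ ω : ∀ _ : Fin n, Fin n → Bool,
      (fun v i => xor (a v i) (xor (a v i) (ω v i))) = ω := by
    intro ω; funext v i; simp [← Bool.xor_assoc]
  apply Finset.card_nbij' (i := fun ω v i => xor (a v i) (ω v i))
    (j := fun κ v i => xor (a v i) (κ v i))
  · intro ω hω
    simp only [Finset.mem_coe, mem_filter, mem_univ, true_and] at *
    have h2 := graph_xor_eq_iff a (fun v i => xor (a v i) (ω v i))
    rw [hinv ω] at h2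
    exact h2.mp (hω.trans ha.symm)
  · intro κ hκ
    simp only [Finset.mem_coe, mem_filter, mem_univ, true_and] at *
    exact ((graph_xor_eq_iff a κ).mpr hκ).trans ha
  · intro ω _; exact hinv ω
  · intro κ _; exact hinv κ

end Aux

theorem even_edge_uniform_is_coloring_model (n : ℕ) (hn : 2 ≤ n) :
    ∃ M : ColoringModel n, ∀ G, M.dist G = evenEdgeUniform n G := by
  haveI : NeZero n := ⟨by omega⟩
  refine ⟨CM n, fun G => ?_⟩
  classical
  have hprod : ∀ ω : ∀ v : Fin n, (CM n).Ω v,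
      (∏ v, (CM n).p v (ω v)) = (((2 : ℝ) ^ n) ^ n)⁻¹ := by
    intro ω
    show (∏ _v : Fin n, ((2 : ℝ) ^ n)⁻¹) = _
    rw [Finset.prod_const, card_univ, Fintype.card_fin, inv_pow]
  have hdist : ∀ H : SimpleGraph (Fin n), (CM n).dist H =
      ((univ.filter (fun ω : ∀ _ : Fin n, Fin n → Bool => (CM n).graph ω = H)).card : ℝ)
        * ((((2 : ℝ) ^ n) ^ n)⁻¹) := by
    intro H
    unfold ColoringModel.dist ColoringModel.pr
    simp only [hprod]
    rw [← Finset.sum_filter, Finset.sum_const, nsmul_eq_mul]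
    rfl
  have hbot : (CM n).graph (fun _ _ => false) = ⊥ := by
    ext u v
    simp only [CM_adj, CM_adj (fun _ _ => false), SimpleGraph.bot_adj, iff_false]
    intro hc
    have h2 := hc.2
    unfold ef at h2
    rw [if_neg hc.1] at h2
    by_cases hu : u = 0
    · rw [if_pos hu] at h2
      unfold gpar at h2
      simp [bz] at h2
    · rw [if_neg hu] at h2
      by_cases hv : v = 0
      · rw [if_pos hv] at h2
        unfold gpar at h2
        simp [bz] at h2
      · rw [if_neg hv] at h2
        simp at h2
  set E := univ.filter (fun H : SimpleGraph (Fin n) => Even (Nat.card H.edgeSet)) with hEdef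
  set k := (univ.filter
    (fun κ : ∀ _ : Fin n, Fin n → Bool => (CM n).graph κ = ⊥)).card with hkdef
  have hkpos : 0 < k := Finset.card_pos.mpr
    ⟨fun _ _ => false, by simp only [mem_filter, mem_univ, true_and]; exact hbot⟩
  have hEbot : (⊥ : SimpleGraph (Fin n)) ∈ E := by
    simp only [hEdef, mem_filter, mem_univ, true_and, SimpleGraph.edgeSet_bot]
    simp
  have hEpos : 0 < E.card := Finset.card_pos.mpr ⟨⊥, hEbot⟩
  have hfiber : ∀ H : SimpleGraph (Fin n), H ∈ E →
      (univ.filter (fun ω : ∀ _ : Fin n, Fin n → Bool => (CM n).graph ω = H)).card = k := by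
    intro H hH
    simp only [hEdef, mem_filter] at hH
    exact fiber_card_eq H (wit H) (wit_graph hn H ((even_iff_Spar H).mp hH.2))
  have hfiber0 : ∀ H : SimpleGraph (Fin n), H ∉ E →
      (univ.filter (fun ω : ∀ _ : Fin n, Fin n → Bool => (CM n).graph ω = H)).card = 0 := by
    intro H hH
    rw [Finset.card_eq_zero, Finset.filter_eq_empty_iff]
    intro ω _ hc
    apply hH
    simp only [hEdef, mem_filter]
    exact ⟨mem_univ H, (even_iff_Spar H).mpr (hc ▸ Spar_CM_graph ω)⟩
  have hcount : E.card * k = (2 ^ n) ^ n := by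
    have h1 : (univ : Finset (∀ _ : Fin n, Fin n → Bool)).card
        = ∑ H ∈ (univ : Finset (SimpleGraph (Fin n))),
            (univ.filter (fun ω : ∀ _ : Fin n, Fin n → Bool => (CM n).graph ω = H)).card :=
      Finset.card_eq_sum_card_fiberwise (fun ω _ => mem_univ _)
    rw [← Finset.sum_subset (Finset.subset_univ E)
      (fun H _ hH => hfiber0 H hH)] at h1
    rw [Finset.sum_congr rfl (fun H hH => hfiber H hH), Finset.sum_const,
      smul_eq_mul] at h1
    rw [← h1, card_univ]
    simp
  by_cases hG : Even (Nat.card G.edgeSet)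
  · have hGE : G ∈ E := by
      simp only [hEdef, mem_filter, mem_univ, true_and]; exact hG
    rw [hdist G, hfiber G hGE]
    unfold evenEdgeUniform
    rw [if_pos hG, ← hEdef]
    have hcast : (E.card : ℝ) * (k : ℝ) = ((2 : ℝ) ^ n) ^ n := by exact_mod_cast hcount
    have hE0 : (E.card : ℝ) ≠ 0 := Nat.cast_ne_zero.mpr (Nat.pos_iff_ne_zero.mp hEpos)
    have hp0 : ((2 : ℝ) ^ n) ^ n ≠ 0 := by positivity
    rw [eq_div_iff hE0]
    rw [show (k : ℝ) * ((((2 : ℝ) ^ n) ^ n)⁻¹) * (E.card : ℝ)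
        = ((E.card : ℝ) * (k : ℝ)) * ((((2 : ℝ) ^ n) ^ n)⁻¹) from by ring,
      hcast, mul_inv_cancel₀ hp0]
  · have hGE : G ∉ E := by
      simp only [hEdef, mem_filter, mem_univ, true_and]; exact hG
    rw [hdist G, hfiber0 G hGE]
    unfold evenEdgeUniform
    rw [if_neg hG]
    simp
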